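/- The expected number of distinct (n−1)-patterns of a uniformly random permutation of length n (n ≥ 2) is exactly n − 2(n−1)/n. -/

import Mathlib

open Finset

/-- `del p i`: delete the `i`-th entry of `p` and relabel order-isomorphically. -/
def del {n : ℕ} (p : Equiv.Perm (Fin (n + 1))) (i : Fin (n + 1)) : Equiv.Perm (Fin n) :=
  (Tuple.sort fun j => p (i.succAbove j))⁻¹

/-- `D1 p`: the set of `(n-1)`-patterns of `p`. -/
def D1 {n : ℕ} (p : Equiv.Perm (Fin (n + 1))) : Finset (Equiv.Perm (Fin n)) :=
  Finset.univ.image (del p)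

/-- `ins q j k`: insert the value `k - 1/2` just left of position `j` and relabel. -/
def ins {n : ℕ} (q : Equiv.Perm (Fin n)) (j k : Fin (n + 1)) : Equiv.Perm (Fin (n + 1)) :=
  (finSuccEquiv' j).trans ((Equiv.optionCongr q).trans (finSuccEquiv' k).symm)

/-- `C p`: the number of bonds of `p` (adjacent positions with values differing by 1). -/
def C {n : ℕ} (p : Equiv.Perm (Fin (n + 1))) : ℕ :=
  (Finset.univ.filter fun i : Fin n =>
    Nat.dist (p i.castSucc).val (p i.succ).val = 1).card

/-- minimum gap of an injective word `f`, via the taxicab metric on (index, value). -/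
noncomputable def mgF {n : ℕ} (f : Fin n → ℕ) : ℕ :=
  sInf {m : ℕ | ∃ i j : Fin n, i < j ∧ Nat.dist i.val j.val + Nat.dist (f i) (f j) = m}

/-- minimum gap of a permutation. -/
noncomputable def mg {n : ℕ} (p : Equiv.Perm (Fin n)) : ℕ := mgF fun i => (p i).val

/-- the span of entries `p i` and `p j`: indices of entries strictly between them
horizontally or vertically. -/
def span {n : ℕ} (p : Equiv.Perm (Fin n)) (i j : Fin n) : Finset (Fin n) :=
  Finset.univ.filter fun m =>
    (i < m ∧ m < j) ∨ (min (p i) (p j) < p m ∧ p m < max (p i) (p j))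

/-- the pattern of `p` after deleting the entries at positions in `S`, encoded as the
list of (0-based) ranks of the remaining entries in positional order. -/
def patList {n : ℕ} (p : Equiv.Perm (Fin n)) (S : Finset (Fin n)) : List ℕ :=
  let l := (Sᶜ.sort (· ≤ ·)).map fun t => (p t).val
  l.map fun v => (l.filter fun w => w < v).length

/-- `Dk p k`: the set of distinct `(n-k)`-patterns of `p`. -/
def Dk {n : ℕ} (p : Equiv.Perm (Fin n)) (k : ℕ) : Finset (List ℕ) :=
  (Finset.univ.filter fun S : Finset (Fin n) => S.card = k).image (patList p)


section Aux

open Equiv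

lemma sort_inv_apply {n : ℕ} {α : Type*} [LinearOrder α] (w : Fin n → α)
    (hw : Function.Injective w) (t : Fin n) :
    (((Tuple.sort w)⁻¹ t : Fin n) : ℕ) = (univ.filter fun s => w s < w t).card := by
  set σ := Tuple.sort w
  have hmono : StrictMono (w ∘ σ) :=
    (Tuple.monotone_sort w).strictMono_of_injective (hw.comp σ.injective)
  have h1 : (univ.filter fun s => w (σ s) < w t).card = (σ⁻¹ t : ℕ) := by
    have : (univ.filter fun s => w (σ s) < w t) =
        univ.filter fun s => s < σ⁻¹ t := by
      ext s
      have := hmono.lt_iff_lt (a := s) (b := σ⁻¹ t)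
      simp only [Function.comp_apply, Equiv.Perm.inv_def, Equiv.apply_symm_apply] at this
      simp [this]
    rw [this, show (univ.filter fun s : Fin n => s < σ⁻¹ t) = Finset.Iio (σ⁻¹ t) by ext; simp]
    simp
  rw [← h1]
  apply Finset.card_bij (fun s _ => σ s)
  · intro a ha; simp at ha ⊢; simpa using ha
  · intro a _ b _ h; exact σ.injective h
  · intro b hb; refine ⟨σ⁻¹ b, ?_, by simp⟩; simp at hb ⊢; simpa using hb

lemma del_apply {n : ℕ} (p : Equiv.Perm (Fin (n + 1))) (i : Fin (n + 1)) (t : Fin n) :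
    ((del p i t : Fin n) : ℕ) + (if (p i : Fin (n+1)) < p (i.succAbove t) then 1 else 0)
      = (p (i.succAbove t) : Fin (n+1)).val := by
  have hw : Function.Injective fun s : Fin n => p (i.succAbove s) := fun a b h =>
    Fin.succAbove_right_injective (p := i) (p.injective h)
  have key := sort_inv_apply _ hw t
  rw [del]
  rw [show ((((Tuple.sort fun j => p (i.succAbove j))⁻¹) t : Fin n) : ℕ)
      = (univ.filter fun s : Fin n => p (i.succAbove s) < p (i.succAbove t)).card from key]
  set v := p (i.succAbove t) with hv
  have h2 : (univ.filter fun s : Fin n => p (i.succAbove s) < v).card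
      = ((univ.filter fun u : Fin (n+1) => p u < v).erase i).card := by
    apply Finset.card_bij (fun s _ => i.succAbove s)
    · intro a ha
      simp only [mem_filter, mem_univ, true_and] at ha
      exact Finset.mem_erase.2 ⟨Fin.succAbove_ne i a, by simp [ha]⟩
    · intro a _ b _ h; exact Fin.succAbove_right_injective h
    · intro u hu
      obtain ⟨hne, hu2⟩ := Finset.mem_erase.1 hu
      obtain ⟨s, hs⟩ := Fin.exists_succAbove_eq hne
      exact ⟨s, by simp only [mem_filter, mem_univ, true_and, hs]; simpa using hu2, hs⟩
  have h3 : (univ.filter fun u : Fin (n+1) => p u < v).card = (v : ℕ) := by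
    have himg : (univ.filter fun u : Fin (n+1) => p u < v) = (Finset.Iio v).image p.symm := by
      ext u
      simp only [mem_filter, mem_univ, true_and, Finset.mem_image, Finset.mem_Iio]
      constructor
      · intro h; exact ⟨p u, h, by simp⟩
      · rintro ⟨x, hx, rfl⟩; simpa using hx
    rw [himg]
    rw [Finset.card_image_of_injective _ p.symm.injective]
    simp
  rw [h2]
  by_cases hc : p i < v
  · rw [Finset.card_erase_of_mem (by simp [hc]), h3]
    simp only [hc, if_true]
    have : 0 < (v : ℕ) := by
      rcases Nat.eq_zero_or_pos (v : ℕ) with h0 | h0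
      · exact absurd hc (by simp [Fin.lt_iff_val_lt_val, h0])
      · exact h0
    omega
  · rw [Finset.erase_eq_of_notMem (by simp [hc]), h3]
    simp [hc]

lemma succAbove_eq_of_ne {n : ℕ} {k t : Fin n} (ht : t ≠ k) :
    (k.castSucc).succAbove t = (k.succ).succAbove t := by
  rcases lt_or_gt_of_ne ht with h | h
  · rw [Fin.succAbove_of_castSucc_lt _ _ (by exact Fin.castSucc_lt_castSucc_iff.2 h),
      Fin.succAbove_of_castSucc_lt _ _ (by
        rw [Fin.lt_iff_val_lt_val]; simp; omega)]
  · rw [Fin.succAbove_of_le_castSucc _ _ (by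
        rw [Fin.le_iff_val_le_val]; simp; omega),
      Fin.succAbove_of_le_castSucc _ _ (by
        rw [Fin.le_iff_val_le_val]; simp; omega)]

lemma bond_del {n : ℕ} (p : Equiv.Perm (Fin (n + 1))) (k : Fin n)
    (h : Nat.dist (p k.castSucc).val (p k.succ).val = 1) :
    del p k.castSucc = del p k.succ := by
  apply Equiv.ext
  intro t
  apply Fin.val_injective
  by_cases ht : t = k
  · subst ht
    have e1 := del_apply p t.castSucc t
    have e2 := del_apply p t.succ t
    rw [Fin.succAbove_castSucc_self] at e1
    rw [Fin.succAbove_succ_self] at e2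
    simp only [Fin.lt_def] at e1 e2
    simp only [Nat.dist] at h
    split_ifs at e1 e2 <;> omega
  · have e1 := del_apply p k.castSucc t
    have e2 := del_apply p k.succ t
    rw [← succAbove_eq_of_ne ht] at e2
    set u := (k.castSucc).succAbove t with hu
    have hua : u ≠ k.castSucc := Fin.succAbove_ne _ _
    have hub : u ≠ k.succ := by rw [hu, succAbove_eq_of_ne ht]; exact Fin.succAbove_ne _ _
    have hva : (p u).val ≠ (p k.castSucc).val := fun hh =>
      hua (p.injective (Fin.val_injective hh))
    have hvb : (p u).val ≠ (p k.succ).val := fun hh =>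
      hub (p.injective (Fin.val_injective hh))
    simp only [Fin.lt_def] at e1 e2
    simp only [Nat.dist] at h
    split_ifs at e1 e2 <;> omega

lemma dist_of_del_eq {n : ℕ} (p : Equiv.Perm (Fin (n + 1))) {i : Fin (n + 1)} {k : Fin n}
    (hij : i < k.succ) (h : del p i = del p k.succ) :
    Nat.dist (p k.castSucc).val (p k.succ).val = 1 := by
  have heq : ((del p i k : Fin n) : ℕ) = ((del p k.succ k : Fin n) : ℕ) := by rw [h]
  have e1 := del_apply p i k
  have e2 := del_apply p k.succ k
  have h1 : i.succAbove k = k.succ := by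
    rw [Fin.succAbove_of_le_castSucc _ _ (by
      rw [Fin.le_iff_val_le_val]; rw [Fin.lt_iff_val_lt_val] at hij
      simp at hij ⊢; omega)]
  have h2 : (k.succ).succAbove k = k.castSucc :=
    Fin.succAbove_of_castSucc_lt _ _ k.castSucc_lt_succ
  rw [h1] at e1
  rw [h2] at e2
  have hne : (p k.castSucc).val ≠ (p k.succ).val := fun hh => by
    have := p.injective (Fin.val_injective hh)
    exact absurd this (by simp [Fin.ext_iff])
  simp only [Fin.lt_def] at e1 e2
  simp only [Nat.dist]
  split_ifs at e1 e2 <;> omega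

lemma run_del {n : ℕ} (p : Equiv.Perm (Fin (n + 1))) {i j : Fin (n + 1)} (hij : i < j)
    (h : del p i = del p j) (k : Fin n) (hk : k.succ = j) : del p k.castSucc = del p j := by
  subst hk
  exact bond_del p k (dist_of_del_eq p hij h)

lemma card_image_of_runs {n : ℕ} {α : Type*} [DecidableEq α] (f : Fin (n + 1) → α)
    (H : ∀ (i j : Fin (n + 1)) (k : Fin n), i < j → k.succ = j → f i = f j →
      f k.castSucc = f j) :
    (univ.image f).card
      = (n + 1) - (univ.filter fun k : Fin n => f k.castSucc = f k.succ).card := by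
  classical
  set S := univ.filter (fun u : Fin (n + 1) => ∀ v, v < u → f v ≠ f u) with hS
  have himg : univ.image f = S.image f := by
    apply Finset.Subset.antisymm _ (Finset.image_subset_image (Finset.subset_univ S))
    intro x hx
    obtain ⟨u, _, rfl⟩ := Finset.mem_image.1 hx
    set M := univ.filter (fun v : Fin (n + 1) => f v = f u) with hM
    have hMne : M.Nonempty := ⟨u, by simp [hM]⟩
    set m := M.min' hMne with hm
    have hmM : m ∈ M := M.min'_mem hMne
    have hfm : f m = f u := (Finset.mem_filter.1 hmM).2
    refine Finset.mem_image.2 ⟨m, ?_, hfm⟩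
    simp only [hS, mem_filter, mem_univ, true_and]
    intro v hv hfv
    have : v ∈ M := by simp [hM, hfv, hfm]
    exact absurd (M.min'_le v this) (not_le.2 hv)
  have hinj : Set.InjOn f S := by
    have key : ∀ a ∈ S, ∀ b ∈ S, a < b → f a = f b → False := by
      intro a _ b hb hlt hab
      have hb0 : b ≠ 0 := fun h => by subst h; exact absurd hlt (Fin.not_lt_zero a)
      have hks : (b.pred hb0).succ = b := Fin.succ_pred b hb0
      have h2 := H a b (b.pred hb0) hlt hks hab
      have hcs : (b.pred hb0).castSucc < b := by
        have hbv : 0 < b.val := Fin.pos_iff_ne_zero.2 hb0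
        rw [Fin.lt_def]; simp only [Fin.coe_castSucc, Fin.coe_pred]; omega
      exact (Finset.mem_filter.1 hb).2 _ hcs h2
    intro a ha b hb hab
    by_contra hne
    rcases Ne.lt_or_gt hne with h | h
    · exact key a ha b hb h hab
    · exact key b hb a ha h hab.symm
  rw [himg, Finset.card_image_of_injOn hinj]
  have hsplit := Finset.card_filter_add_card_filter_not
    (s := (univ : Finset (Fin (n+1)))) (p := fun u => ∀ v, v < u → f v ≠ f u)
  rw [Finset.card_univ, Fintype.card_fin] at hsplit
  have hT : (univ.filter fun k : Fin n => f k.castSucc = f k.succ).card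
      = (univ.filter (fun u : Fin (n+1) => ¬ ∀ v, v < u → f v ≠ f u)).card := by
    apply Finset.card_bij (fun k _ => k.succ)
    · intro k hk
      simp only [mem_filter, mem_univ, true_and] at hk ⊢
      push_neg
      exact ⟨k.castSucc, k.castSucc_lt_succ, hk⟩
    · intro a _ b _ h; exact Fin.succ_injective _ h
    · intro u hu
      simp only [mem_filter, mem_univ, true_and] at hu
      push_neg at hu
      obtain ⟨v, hv, hfv⟩ := hu
      have hu0 : u ≠ 0 := by rintro rfl; exact absurd hv (Fin.not_lt_zero v)
      refine ⟨u.pred hu0, ?_, Fin.succ_pred u hu0⟩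
      simp only [mem_filter, mem_univ, true_and]
      have h1 := H v u (u.pred hu0) hv (Fin.succ_pred u hu0) hfv
      rw [Fin.succ_pred]
      exact h1
  rw [← hS] at hsplit
  rw [hT]
  beta_reduce at hsplit
  omega

lemma card_D1 {n : ℕ} (p : Equiv.Perm (Fin (n + 1))) :
    (D1 p).card = (n + 1) - C p := by
  classical
  rw [D1, C, card_image_of_runs (del p) (fun i j k hij hk h => run_del p hij h k hk)]
  congr 1
  apply Finset.card_nbij id
  · intro k hk
    simp only [Finset.mem_coe, mem_filter, mem_univ, true_and, id] at hk ⊢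
    exact dist_of_del_eq p k.castSucc_lt_succ hk
  · intro a _ b _ h; exact h
  · intro k hk
    simp only [Set.mem_image, Finset.mem_coe, mem_filter, mem_univ, true_and, id] at hk ⊢
    exact ⟨k, bond_del p k hk, rfl⟩

lemma card_fix2 {α : Type*} [DecidableEq α] [Fintype α] {a b : α} (hab : a ≠ b) :
    (univ.filter fun p : Perm α => p a = a ∧ p b = b).card
      = Nat.factorial (Fintype.card α - 2) := by
  classical
  have h1 : (univ.filter fun p : Perm α => p a = a ∧ p b = b).card
      = Fintype.card {f : Perm α // ∀ z, ¬(z ≠ a ∧ z ≠ b) → f z = z} := by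
    rw [Fintype.card_subtype]
    congr 1
    apply Finset.filter_congr
    intro p _
    constructor
    · rintro ⟨h1, h2⟩ z hz
      rcases not_and_or.1 hz with h | h
      · rw [not_ne_iff.1 h]; exact h1
      · rw [not_ne_iff.1 h]; exact h2
    · intro h
      exact ⟨h a (by simp), h b (by simp)⟩
  rw [h1, ← Fintype.card_congr (Equiv.Perm.subtypeEquivSubtypePerm (fun z => z ≠ a ∧ z ≠ b)),
    Fintype.card_perm]
  congr 1
  rw [Fintype.card_subtype]
  have : (univ.filter fun z : α => z ≠ a ∧ z ≠ b) = univ \ {a, b} := by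
    ext z; simp [not_or]
  rw [this, Finset.card_sdiff_of_subset (by simp)]
  simp [Finset.card_insert_of_notMem, hab]

lemma card_pair_fiber {α : Type*} [DecidableEq α] [Fintype α] {a b x y : α}
    (hab : a ≠ b) (hxy : x ≠ y) :
    (univ.filter fun p : Perm α => p a = x ∧ p b = y).card
      = Nat.factorial (Fintype.card α - 2) := by
  classical
  set σ1 : Perm α := Equiv.swap a x with hσ1
  set b' : α := σ1 b with hb'
  set σ2 : Perm α := Equiv.swap b' y with hσ2
  set p0 : Perm α := σ2 * σ1 with hp0
  have hxb' : x ≠ b' := by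
    rw [hb', hσ1]
    intro h
    exact hab (σ1.injective (by rw [← h, hσ1, Equiv.swap_apply_left]))
  have hp0a : p0 a = x := by
    rw [hp0, Perm.mul_apply, hσ1, Equiv.swap_apply_left, hσ2,
      Equiv.swap_apply_of_ne_of_ne hxb' hxy]
  have hp0b : p0 b = y := by
    rw [hp0, Perm.mul_apply, ← hb', hσ2, Equiv.swap_apply_left]
  have himg : (univ.filter fun p : Perm α => p a = x ∧ p b = y)
      = (univ.filter fun p : Perm α => p a = a ∧ p b = b).image (fun q => p0 * q) := by
    ext p
    simp only [mem_filter, mem_univ, true_and, Finset.mem_image]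
    constructor
    · rintro ⟨h1, h2⟩
      refine ⟨p0⁻¹ * p, ⟨?_, ?_⟩, by group⟩
      · rw [Perm.mul_apply, h1, ← hp0a, Perm.inv_def, Equiv.symm_apply_apply]
      · rw [Perm.mul_apply, h2, ← hp0b, Perm.inv_def, Equiv.symm_apply_apply]
    · rintro ⟨q, ⟨h1, h2⟩, rfl⟩
      constructor
      · rw [Perm.mul_apply, h1, hp0a]
      · rw [Perm.mul_apply, h2, hp0b]
  rw [himg, Finset.card_image_of_injective _ (fun q r h => by
    simpa using mul_left_cancel h), card_fix2 hab]

set_option linter.unnecessarySeqFocus false in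
lemma card_adj_pairs (n : ℕ) :
    (univ.filter fun xy : Fin (n+1) × Fin (n+1) => Nat.dist xy.1.val xy.2.val = 1).card
      = 2 * n := by
  have himg : (univ.filter fun xy : Fin (n+1) × Fin (n+1) => Nat.dist xy.1.val xy.2.val = 1)
      = (univ : Finset (Fin n ⊕ Fin n)).image
          (Sum.elim (fun i => (i.castSucc, i.succ)) (fun i => (i.succ, i.castSucc))) := by
    ext ⟨x, y⟩
    simp only [mem_filter, mem_univ, true_and, Finset.mem_image]
    constructor
    · intro h
      simp only [Nat.dist] at h
      rcases lt_or_gt_of_ne (show x.val ≠ y.val by omega) with hlt | hlt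
      · have hx : x.val < n := by omega
        refine ⟨Sum.inl ⟨x.val, hx⟩, ?_⟩
        simp only [Sum.elim_inl, Prod.mk.injEq]
        constructor <;> apply Fin.ext <;> simp <;> omega
      · have hy : y.val < n := by omega
        refine ⟨Sum.inr ⟨y.val, hy⟩, ?_⟩
        simp only [Sum.elim_inr, Prod.mk.injEq]
        constructor <;> apply Fin.ext <;> simp <;> omega
    · rintro ⟨(i | i), h⟩ <;>
      · simp only [Sum.elim_inl, Sum.elim_inr, Prod.mk.injEq] at h
        obtain ⟨h1, h2⟩ := h
        subst h1; subst h2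
        simp [Nat.dist]
  rw [himg, Finset.card_image_of_injective]
  · simp; omega
  · rintro (i | i) (j | j) h <;>
      simp only [Sum.elim_inl, Sum.elim_inr, Prod.mk.injEq] at h <;>
      obtain ⟨h1, h2⟩ := h <;>
      have e1 := congrArg Fin.val h1 <;>
      have e2 := congrArg Fin.val h2 <;>
      simp only [Fin.coe_castSucc, Fin.val_succ] at e1 e2
    · exact congrArg Sum.inl (Fin.ext e1)
    · omega
    · omega
    · exact congrArg Sum.inr (Fin.ext (by omega))

lemma card_bond_at {n : ℕ} {a b : Fin (n + 1)} (hab : a ≠ b) :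
    (univ.filter fun p : Perm (Fin (n + 1)) => Nat.dist (p a).val (p b).val = 1).card
      = 2 * n * Nat.factorial (n - 1) := by
  classical
  set pairs := univ.filter fun xy : Fin (n+1) × Fin (n+1) => Nat.dist xy.1.val xy.2.val = 1
    with hpairs
  rw [Finset.card_eq_sum_card_fiberwise (f := fun p : Perm (Fin (n+1)) => (p a, p b))
    (t := pairs) (fun p hp => by
      simp only [hpairs, Finset.mem_coe, mem_filter, mem_univ, true_and] at hp ⊢
      exact hp)]
  have hfib : ∀ xy ∈ pairs,
      ((univ.filter fun p : Perm (Fin (n+1)) => Nat.dist (p a).val (p b).val = 1).filter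
        fun p => (p a, p b) = xy).card = Nat.factorial (n - 1) := by
    rintro ⟨x, y⟩ hxy
    simp only [hpairs, mem_filter, mem_univ, true_and] at hxy
    have hxyne : x ≠ y := fun h => by subst h; simp [Nat.dist] at hxy
    have : ((univ.filter fun p : Perm (Fin (n+1)) => Nat.dist (p a).val (p b).val = 1).filter
        fun p => (p a, p b) = (x, y))
        = univ.filter fun p : Perm (Fin (n+1)) => p a = x ∧ p b = y := by
      ext p
      simp only [Finset.filter_filter, mem_filter, mem_univ, true_and, Prod.mk.injEq]
      constructor
      · rintro ⟨_, h1, h2⟩; exact ⟨h1, h2⟩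
      · rintro ⟨h1, h2⟩; subst h1; subst h2; exact ⟨hxy, rfl, rfl⟩
    rw [this, card_pair_fiber hab hxyne]
    congr 1
    simp
  rw [Finset.sum_congr rfl hfib, Finset.sum_const, card_adj_pairs n, smul_eq_mul]

lemma sum_C {n : ℕ} (hn : 1 ≤ n) :
    (∑ p : Perm (Fin (n + 1)), C p) = 2 * n * Nat.factorial n := by
  classical
  simp only [C]
  have hswap : (∑ p : Perm (Fin (n + 1)), (univ.filter fun k : Fin n =>
      Nat.dist (p k.castSucc).val (p k.succ).val = 1).card)
      = ∑ k : Fin n, (univ.filter fun p : Perm (Fin (n + 1)) =>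
          Nat.dist (p k.castSucc).val (p k.succ).val = 1).card := by
    simp only [Finset.card_filter]
    rw [Finset.sum_comm]
  rw [hswap]
  have hterm : ∀ k : Fin n, (univ.filter fun p : Perm (Fin (n + 1)) =>
      Nat.dist (p k.castSucc).val (p k.succ).val = 1).card
        = 2 * n * Nat.factorial (n-1) := by
    intro k
    exact card_bond_at (fun h => by
      have := congrArg Fin.val h
      simp at this)
  rw [Finset.sum_congr rfl (fun k _ => hterm k), Finset.sum_const, smul_eq_mul]
  simp only [Finset.card_univ, Fintype.card_fin]
  have : Nat.factorial n = n * Nat.factorial (n - 1) := by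
    conv_lhs => rw [show n = (n-1) + 1 by omega]
    rw [Nat.factorial_succ]
    congr 1
    omega
  rw [this]
  ring

end Aux

theorem stmt6 {n : ℕ} (hn : 1 ≤ n) :
    (∑ p : Equiv.Perm (Fin (n + 1)), ((D1 p).card : ℚ)) / (Nat.factorial (n + 1))
      = (n + 1) - 2 * n / (n + 1) := by
  classical
  have hCle : ∀ p : Equiv.Perm (Fin (n + 1)), C p ≤ n := fun p =>
    (Finset.card_filter_le _ _).trans (by simp)
  have hcast : ∀ p : Equiv.Perm (Fin (n + 1)), ((D1 p).card : ℚ) = (n + 1 : ℚ) - (C p : ℚ) := by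
    intro p
    rw [card_D1 p, Nat.cast_sub ((hCle p).trans (Nat.le_succ n))]
    push_cast
    ring
  rw [Finset.sum_congr rfl (fun p _ => hcast p), Finset.sum_sub_distrib]
  rw [Finset.sum_const, ← Nat.cast_sum _ _, sum_C hn]
  simp only [Finset.card_univ, Fintype.card_perm, Fintype.card_fin, nsmul_eq_mul]
  have hfac : (Nat.factorial (n + 1) : ℚ) = (n + 1) * Nat.factorial n := by
    rw [Nat.factorial_succ]; push_cast; ring
  have h1 : (Nat.factorial (n + 1) : ℚ) ≠ 0 := Nat.cast_ne_zero.2 (Nat.factorial_ne_zero _)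
  have h2 : (n + 1 : ℚ) ≠ 0 := by positivity
  have h3 : (Nat.factorial n : ℚ) ≠ 0 := Nat.cast_ne_zero.2 (Nat.factorial_ne_zero _)
  field_simp
  rw [hfac]
  push_cast
  ring
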